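/- arXiv:2105.14866 — 2 statements merged into one kernel-verified Lean document; each statement's English description precedes it below -/
import Mathlib

section
/- Let γ denote the standard Gaussian probability measure on ℝ (mean 0, variance 1), and let k be a natural number. If f : ℝ → ℝ is k-times continuously differentiable and f together with each of its derivatives f⁽¹⁾, …, f⁽ᵏ⁾ is square-integrable with respect to γ, then ∫ f(x) · H_k(x) dγ(x) = ∫ f⁽ᵏ⁾(x) dγ(x). -/
open MeasureTheory ProbabilityTheory
open scoped NNReal ENNReal

/-- The probabilists' Hermite polynomials, defined by the recursion
`H 0 x = 1`, `H 1 x = x`, `H (k+1) x = x * H k x - k * H (k-1) x`. -/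
noncomputable def hermiteH : ℕ → ℝ → ℝ
  | 0 => fun _ => 1
  | 1 => fun x => x
  | (k + 2) => fun x => x * hermiteH (k + 1) x - (k + 1) * hermiteH k x

lemma hermiteH_succ' (k : ℕ) (x : ℝ) :
    hermiteH (k + 1) x = x * hermiteH k x - (k : ℝ) * hermiteH (k - 1) x := by
  cases k with
  | zero => simp [hermiteH]
  | succ n => simp [hermiteH]

lemma hermiteH_hasDerivAt (k : ℕ) (x : ℝ) :
    HasDerivAt (hermiteH k) ((k : ℝ) * hermiteH (k - 1) x) x := by
  induction k using Nat.twoStepInduction generalizing x with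
  | zero => simpa [hermiteH] using hasDerivAt_const x (1 : ℝ)
  | one => simpa [hermiteH] using hasDerivAt_id' x
  | more n ih0 ih1 =>
    have h : HasDerivAt (hermiteH (n + 2))
        (1 * hermiteH (n + 1) x + x * (((n : ℝ) + 1) * hermiteH n x)
          - ((n : ℝ) + 1) * ((n : ℝ) * hermiteH (n - 1) x)) x := by
      have h1 : HasDerivAt (fun y => y * hermiteH (n + 1) y)
          (1 * hermiteH (n + 1) x + x * (((n : ℝ) + 1) * hermiteH n x)) x := by
        have := (hasDerivAt_id' x).mul (ih1 x)
        simpa [Pi.mul_def] using this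
      have h2 : HasDerivAt (fun y => ((n : ℝ) + 1) * hermiteH n y)
          (((n : ℝ) + 1) * ((n : ℝ) * hermiteH (n - 1) x)) x := (ih0 x).const_mul _
      have := h1.sub h2
      apply this.congr_deriv rfl
    apply h.congr_deriv
    have hs : hermiteH (n + 1) x = x * hermiteH n x - (n : ℝ) * hermiteH (n - 1) x :=
      hermiteH_succ' n x
    have hidx : n + 2 - 1 = n + 1 := rfl
    rw [hidx]
    push_cast
    rw [hs]
    ring

lemma hermiteH_continuous (k : ℕ) : Continuous (hermiteH k) :=
  continuous_iff_continuousAt.2 fun x => (hermiteH_hasDerivAt k x).continuousAt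

lemma hermiteH_abs_le (k : ℕ) (x : ℝ) :
    |hermiteH k x| ≤ (Nat.factorial (k + 1) : ℝ) * (1 + x ^ 2) ^ k := by
  induction k using Nat.twoStepInduction generalizing x with
  | zero => simp [hermiteH]
  | one =>
    have h : |x| ≤ 1 + x ^ 2 := by nlinarith [abs_nonneg x, sq_abs x]
    simp only [hermiteH, pow_one, Nat.factorial]
    push_cast
    nlinarith [abs_nonneg x, sq_nonneg x]
  | more n ih0 ih1 =>
    have hA : (1 : ℝ) ≤ 1 + x ^ 2 := by nlinarith [sq_nonneg x]
    have hApos : (0 : ℝ) < 1 + x ^ 2 := by nlinarith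
    have hxA : |x| ≤ 1 + x ^ 2 := by nlinarith [abs_nonneg x, sq_abs x]
    have hfac1 : (0 : ℝ) < (Nat.factorial (n + 2) : ℝ) := by positivity
    have hpow : (0 : ℝ) ≤ (1 + x ^ 2) ^ (n + 1) := by positivity
    have h1 : |x * hermiteH (n + 1) x|
        ≤ (Nat.factorial (n + 2) : ℝ) * (1 + x ^ 2) ^ (n + 2) := by
      rw [abs_mul]
      calc |x| * |hermiteH (n + 1) x|
          ≤ (1 + x ^ 2) * ((Nat.factorial (n + 2) : ℝ) * (1 + x ^ 2) ^ (n + 1)) := by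
            apply mul_le_mul hxA (ih1 x) (abs_nonneg _) hApos.le
        _ = (Nat.factorial (n + 2) : ℝ) * (1 + x ^ 2) ^ (n + 2) := by ring
    have h2 : ((n : ℝ) + 1) * |hermiteH n x|
        ≤ (Nat.factorial (n + 2) : ℝ) * (1 + x ^ 2) ^ (n + 2) := by
      have hp : (1 + x ^ 2) ^ n ≤ (1 + x ^ 2) ^ (n + 2) :=
        pow_le_pow_right₀ hA (by omega)
      have : ((n : ℝ) + 1) * |hermiteH n x|
          ≤ ((n : ℝ) + 1) * ((Nat.factorial (n + 1) : ℝ) * (1 + x ^ 2) ^ n) := by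
        apply mul_le_mul_of_nonneg_left (ih0 x) (by positivity)
      refine this.trans ?_
      have hle : ((n : ℝ) + 1) * (Nat.factorial (n + 1) : ℝ) ≤ (Nat.factorial (n + 2) : ℝ) := by
        rw [show n + 2 = (n + 1) + 1 from rfl, Nat.factorial_succ (n + 1)]
        have : (0:ℝ) ≤ (Nat.factorial (n + 1) : ℝ) := by positivity
        push_cast
        nlinarith [this]
      calc ((n : ℝ) + 1) * ((Nat.factorial (n + 1) : ℝ) * (1 + x ^ 2) ^ n)
          = (((n : ℝ) + 1) * (Nat.factorial (n + 1) : ℝ)) * (1 + x ^ 2) ^ n := by ring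
        _ ≤ (Nat.factorial (n + 2) : ℝ) * (1 + x ^ 2) ^ n := by
            apply mul_le_mul_of_nonneg_right hle (by positivity)
        _ ≤ (Nat.factorial (n + 2) : ℝ) * (1 + x ^ 2) ^ (n + 2) := by
            apply mul_le_mul_of_nonneg_left hp hfac1.le
    have hstep : |hermiteH (n + 2) x|
        ≤ 2 * ((Nat.factorial (n + 2) : ℝ) * (1 + x ^ 2) ^ (n + 2)) := by
      have : hermiteH (n + 2) x = x * hermiteH (n + 1) x - ((n : ℝ) + 1) * hermiteH n x := by
        simp [hermiteH]
      rw [this]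
      calc |x * hermiteH (n + 1) x - ((n : ℝ) + 1) * hermiteH n x|
          ≤ |x * hermiteH (n + 1) x| + |((n : ℝ) + 1) * hermiteH n x| := abs_sub _ _
        _ ≤ (Nat.factorial (n + 2) : ℝ) * (1 + x ^ 2) ^ (n + 2)
              + (Nat.factorial (n + 2) : ℝ) * (1 + x ^ 2) ^ (n + 2) := by
            refine add_le_add h1 ?_
            rw [abs_mul, abs_of_nonneg (by positivity : (0:ℝ) ≤ (n : ℝ) + 1)]
            exact h2
        _ = 2 * ((Nat.factorial (n + 2) : ℝ) * (1 + x ^ 2) ^ (n + 2)) := by ring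
    refine hstep.trans ?_
    have : (2 : ℝ) * (Nat.factorial (n + 2) : ℝ) ≤ (Nat.factorial (n + 3) : ℝ) := by
      rw [show n + 3 = (n + 2) + 1 from rfl, Nat.factorial_succ (n + 2)]
      push_cast
      nlinarith [hfac1]
    nlinarith [pow_nonneg hApos.le (n + 2)]

/-- The standard Gaussian density, simplified. -/
noncomputable def gphi : ℝ → ℝ := fun x => (Real.sqrt (2 * Real.pi))⁻¹ * Real.exp (-(1/2) * x ^ 2)

lemma gphi_pos (x : ℝ) : 0 < gphi x := by
  unfold gphi
  have : (0 : ℝ) < Real.sqrt (2 * Real.pi) := Real.sqrt_pos.2 (by positivity)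
  positivity

lemma gaussianPDFReal_eq (x : ℝ) : gaussianPDFReal 0 1 x = gphi x := by
  unfold gphi gaussianPDFReal
  push_cast
  rw [mul_one]
  congr 1
  congr 1
  ring

lemma gaussianReal_eq :
    gaussianReal 0 1 = volume.withDensity (fun x => ENNReal.ofReal (gphi x)) := by
  rw [gaussianReal_of_var_ne_zero 0 one_ne_zero]
  congr 1
  funext x
  rw [gaussianPDF, gaussianPDFReal_eq]

lemma gphi_measurable : Measurable gphi := by
  unfold gphi
  fun_prop

lemma gphi_hasDerivAt (x : ℝ) : HasDerivAt gphi (-x * gphi x) x := by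
  unfold gphi
  have h1 : HasDerivAt (fun y : ℝ => -(1/2) * y ^ 2) (-(1/2) * (2 * x)) x := by
    simpa using ((hasDerivAt_pow 2 x).const_mul (-(1/2) : ℝ))
  have h2 : HasDerivAt (fun y : ℝ => Real.exp (-(1/2) * y ^ 2))
      (Real.exp (-(1/2) * x ^ 2) * (-(1/2) * (2 * x))) x := h1.exp
  have := h2.const_mul ((Real.sqrt (2 * Real.pi))⁻¹)
  apply this.congr_deriv
  ring

lemma integrable_gaussian_iff (g : ℝ → ℝ) :
    Integrable g (gaussianReal 0 1) ↔ Integrable (fun x => g x * gphi x) volume := by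
  rw [gaussianReal_eq, integrable_withDensity_iff (gphi_measurable.ennreal_ofReal)
    (Filter.Eventually.of_forall fun x => ENNReal.ofReal_lt_top)]
  have he : (fun x => g x * (ENNReal.ofReal (gphi x)).toReal) = fun x => g x * gphi x := by
    funext x
    rw [ENNReal.toReal_ofReal (gphi_pos x).le]
  rw [he]

lemma integral_gaussian_eq (g : ℝ → ℝ) :
    ∫ x, g x ∂(gaussianReal 0 1) = ∫ x, g x * gphi x := by
  rw [gaussianReal_eq]
  have hm : Measurable fun x => (gphi x).toNNReal :=
    gphi_measurable.real_toNNReal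
  have hd : (fun x : ℝ => ENNReal.ofReal (gphi x))
      = fun x : ℝ => (((gphi x).toNNReal : ℝ≥0) : ℝ≥0∞) := rfl
  rw [hd, integral_withDensity_eq_integral_smul hm]
  congr 1
  funext x
  simp [NNReal.smul_def, Real.coe_toNNReal _ (gphi_pos x).le, mul_comm]

lemma memℒp_hermiteH (k : ℕ) : MemLp (hermiteH k) 2 (gaussianReal 0 1) := by
  have hmeas : AEStronglyMeasurable (hermiteH k) (gaussianReal 0 1) :=
    (hermiteH_continuous k).aestronglyMeasurable
  rw [memLp_two_iff_integrable_sq hmeas]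
  -- dominate by a polynomial times the density
  have hbound : ∀ x : ℝ, ‖hermiteH k x ^ 2‖
      ≤ ((Nat.factorial (k + 1) : ℝ)) ^ 2 * (1 + x ^ 2) ^ (2 * k) := by
    intro x
    have h := hermiteH_abs_le k x
    have h0 : (0:ℝ) ≤ |hermiteH k x| := abs_nonneg _
    have : |hermiteH k x| ^ 2 ≤ ((Nat.factorial (k + 1) : ℝ) * (1 + x ^ 2) ^ k) ^ 2 :=
      pow_le_pow_left₀ h0 h 2
    rw [Real.norm_eq_abs, abs_pow]
    calc |hermiteH k x| ^ 2 ≤ ((Nat.factorial (k + 1) : ℝ) * (1 + x ^ 2) ^ k) ^ 2 := this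
      _ = ((Nat.factorial (k + 1) : ℝ)) ^ 2 * (1 + x ^ 2) ^ (2 * k) := by
          rw [mul_pow, ← pow_mul, mul_comm k 2]
  have hintpoly : Integrable (fun x : ℝ => (1 + x ^ 2) ^ (2 * k)) (gaussianReal 0 1) := by
    rw [integrable_gaussian_iff]
    unfold gphi
    set n := 2 * k
    have hb : (0:ℝ) < 1/2 := by norm_num
    have h1 : Integrable (fun x : ℝ => Real.exp (-(1/2) * x ^ 2)) volume := by
      simpa using integrable_exp_neg_mul_sq hb
    have h2 : Integrable (fun x : ℝ => x ^ ((2 * n : ℕ) : ℝ) * Real.exp (-(1/2) * x ^ 2))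
        volume := integrable_rpow_mul_exp_neg_mul_sq hb
          (lt_of_lt_of_le (by norm_num) (Nat.cast_nonneg _))
    have h2' : Integrable (fun x : ℝ => x ^ (2 * n) * Real.exp (-(1/2) * x ^ 2)) volume := by
      refine h2.congr (Filter.Eventually.of_forall fun x => ?_)
      simp only [Real.rpow_natCast]
    have hsum := (h1.const_mul ((2:ℝ) ^ n * (Real.sqrt (2 * Real.pi))⁻¹)).add
      (h2'.const_mul ((2:ℝ) ^ n * (Real.sqrt (2 * Real.pi))⁻¹))
    refine Integrable.mono' hsum ?_ ?_
    · apply Continuous.aestronglyMeasurable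
      have : (0:ℝ) < Real.sqrt (2 * Real.pi) := Real.sqrt_pos.2 (by positivity)
      fun_prop
    · refine Filter.Eventually.of_forall fun x => ?_
      have hA : (1:ℝ) ≤ 1 + x ^ 2 := by nlinarith [sq_nonneg x]
      have hApos : (0:ℝ) < 1 + x ^ 2 := by nlinarith
      have hcs : (0:ℝ) < (Real.sqrt (2 * Real.pi))⁻¹ := by
        have : (0 : ℝ) < Real.sqrt (2 * Real.pi) := Real.sqrt_pos.2 (by positivity)
        positivity
      have hexp : (0:ℝ) < Real.exp (-(1/2) * x ^ 2) := Real.exp_pos _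
      have key : (1 + x ^ 2) ^ n ≤ 2 ^ n * (1 + x ^ (2 * n)) := by
        have hmax : (1:ℝ) + x ^ 2 ≤ 2 * max 1 (x ^ 2) := by
          rcases le_total (1:ℝ) (x ^ 2) with h | h
          · rw [max_eq_right h]; nlinarith
          · rw [max_eq_left h]; nlinarith
        have h1n : (1 + x ^ 2) ^ n ≤ (2 * max 1 (x ^ 2)) ^ n :=
          pow_le_pow_left₀ hApos.le hmax n
        have h2n : (max 1 (x ^ 2)) ^ n ≤ 1 + x ^ (2 * n) := by
          rcases le_total (1:ℝ) (x ^ 2) with h | h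
          · rw [max_eq_right h, ← pow_mul]
            have : (0:ℝ) ≤ x ^ (2 * n) := (even_two_mul n).pow_nonneg x
            nlinarith [this]
          · rw [max_eq_left h, one_pow]
            have : (0:ℝ) ≤ x ^ (2 * n) := (even_two_mul n).pow_nonneg x
            nlinarith [this]
        calc (1 + x ^ 2) ^ n ≤ (2 * max 1 (x ^ 2)) ^ n := h1n
          _ = 2 ^ n * (max 1 (x ^ 2)) ^ n := mul_pow 2 _ n
          _ ≤ 2 ^ n * (1 + x ^ (2 * n)) := by
              apply mul_le_mul_of_nonneg_left h2n (by positivity)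
      rw [Real.norm_eq_abs, abs_of_nonneg (by positivity)]
      calc (1 + x ^ 2) ^ n * ((Real.sqrt (2 * Real.pi))⁻¹ * Real.exp (-(1/2) * x ^ 2))
          ≤ 2 ^ n * (1 + x ^ (2 * n)) * ((Real.sqrt (2 * Real.pi))⁻¹ * Real.exp (-(1/2) * x ^ 2)) := by
            apply mul_le_mul_of_nonneg_right key (by positivity)
        _ = 2 ^ n * (Real.sqrt (2 * Real.pi))⁻¹ * Real.exp (-(1/2) * x ^ 2)
              + 2 ^ n * (Real.sqrt (2 * Real.pi))⁻¹ * (x ^ (2 * n) * Real.exp (-(1/2) * x ^ 2)) := by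
            ring
  refine Integrable.mono' (hintpoly.const_mul (((Nat.factorial (k + 1) : ℝ)) ^ 2)) ?_
    (Filter.Eventually.of_forall fun x => by
      simpa [mul_comm] using hbound x)
  exact (((hermiteH_continuous k).pow 2).aestronglyMeasurable)

lemma integrable_mul_of_memL2 {g h : ℝ → ℝ}
    (hg : MemLp g 2 (gaussianReal 0 1)) (hh : MemLp h 2 (gaussianReal 0 1)) :
    Integrable (fun x => g x * h x) (gaussianReal 0 1) := by
  have := hh.smul (φ := g) hg (p := 2) (q := 2) (r := 1) (hpqr := ⟨by
    rw [inv_one]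
    exact ENNReal.inv_two_add_inv_two⟩)
  rw [memLp_one_iff_integrable] at this
  exact this.congr (Filter.Eventually.of_forall fun x => rfl)

/-- Key integration by parts step. -/
lemma gaussian_ibp (k : ℕ) (f : ℝ → ℝ) (hf : ContDiff ℝ 1 f)
    (h0 : MemLp f 2 (gaussianReal 0 1)) (h1 : MemLp (deriv f) 2 (gaussianReal 0 1)) :
    ∫ x, f x * hermiteH (k + 1) x ∂(gaussianReal 0 1)
      = ∫ x, deriv f x * hermiteH k x ∂(gaussianReal 0 1) := by
  set γ := gaussianReal 0 1
  have hfd : ∀ x, HasDerivAt f (deriv f x) x := fun x =>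
    ((hf.differentiable one_ne_zero) x).hasDerivAt
  set G : ℝ → ℝ := fun x => f x * hermiteH k x * gphi x with hG_def
  set G' : ℝ → ℝ := fun x =>
    (deriv f x * hermiteH k x - f x * hermiteH (k + 1) x) * gphi x with hG'_def
  have hG : ∀ x, HasDerivAt G (G' x) x := by
    intro x
    have h := ((hfd x).mul (hermiteH_hasDerivAt k x)).mul (gphi_hasDerivAt x)
    apply h.congr_deriv
    simp only [hG'_def]
    rw [hermiteH_succ' k x]
    simp only [Pi.mul_apply]
    ring
  have Ia : Integrable (fun x => f x * hermiteH (k + 1) x) γ :=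
    integrable_mul_of_memL2 h0 (memℒp_hermiteH (k + 1))
  have Ib : Integrable (fun x => deriv f x * hermiteH k x) γ :=
    integrable_mul_of_memL2 h1 (memℒp_hermiteH k)
  have Ic : Integrable (fun x => f x * hermiteH k x) γ :=
    integrable_mul_of_memL2 h0 (memℒp_hermiteH k)
  have IG : Integrable G volume := by
    have := (integrable_gaussian_iff (fun x => f x * hermiteH k x)).1 Ic
    exact this
  have IG' : Integrable G' volume := by
    have hsub : Integrable (fun x => deriv f x * hermiteH k x - f x * hermiteH (k + 1) x) γ :=
      Ib.sub Ia
    exact (integrable_gaussian_iff _).1 hsub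
  have Ttop : Filter.Tendsto G Filter.atTop (nhds 0) :=
    tendsto_zero_of_hasDerivAt_of_integrableOn_Ioi (a := 0)
      (fun x _ => hG x) IG'.integrableOn IG.integrableOn
  have Tbot : Filter.Tendsto G Filter.atBot (nhds 0) :=
    tendsto_zero_of_hasDerivAt_of_integrableOn_Iic (a := 0)
      (fun x _ => hG x) IG'.integrableOn IG.integrableOn
  have hIic : ∫ x in Set.Iic (0:ℝ), G' x = G 0 - 0 :=
    integral_Iic_of_hasDerivAt_of_tendsto' (fun x _ => hG x) IG'.integrableOn Tbot
  have hIoi : ∫ x in Set.Ioi (0:ℝ), G' x = 0 - G 0 :=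
    integral_Ioi_of_hasDerivAt_of_tendsto' (fun x _ => hG x) IG'.integrableOn Ttop
  have htot : ∫ x, G' x = 0 := by
    rw [← intervalIntegral.integral_Iic_add_Ioi (b := (0:ℝ)) IG'.integrableOn IG'.integrableOn, hIic, hIoi]
    ring
  have hconv : ∫ x, (deriv f x * hermiteH k x - f x * hermiteH (k + 1) x) ∂γ = 0 := by
    rw [integral_gaussian_eq]
    exact htot
  have := integral_sub Ib Ia
  rw [hconv] at this
  linarith [this]

/-- For the standard Gaussian measure γ and a `k`-times continuously differentiable `f`
with `f, f⁽¹⁾, …, f⁽ᵏ⁾` square-integrable w.r.t. γ, one has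
`∫ f(x) H_k(x) dγ(x) = ∫ f⁽ᵏ⁾(x) dγ(x)`. -/
theorem hermite_coeff_eq_integral_iteratedDeriv (k : ℕ) (f : ℝ → ℝ)
    (hf : ContDiff ℝ k f)
    (hint : ∀ j ≤ k, MemLp (iteratedDeriv j f) 2 (gaussianReal 0 1)) :
    ∫ x, f x * hermiteH k x ∂(gaussianReal 0 1)
      = ∫ x, iteratedDeriv k f x ∂(gaussianReal 0 1) := by
  induction k generalizing f with
  | zero => simp [hermiteH, iteratedDeriv_zero]
  | succ k ih =>
    have h0 : MemLp f 2 (gaussianReal 0 1) := by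
      have := hint 0 (by omega)
      rwa [iteratedDeriv_zero] at this
    have h1 : MemLp (deriv f) 2 (gaussianReal 0 1) := by
      have := hint 1 (by omega)
      rwa [iteratedDeriv_one] at this
    have hf1 : ContDiff ℝ 1 f := hf.of_le (by exact_mod_cast Nat.one_le_iff_ne_zero.2 (by omega))
    have hfsucc : ContDiff ℝ ((k : ℕ∞) + 1) f := by exact_mod_cast hf
    have hfd : ContDiff ℝ k (deriv f) := (contDiff_succ_iff_deriv.mp hfsucc).2.2
    rw [gaussian_ibp k f hf1 h0 h1]
    rw [iteratedDeriv_succ']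
    exact ih (deriv f) hfd (fun j hj => by
      have := hint (j + 1) (by omega)
      rwa [iteratedDeriv_succ'] at this)
end

section
/- Let μ ∈ ℝ and σ > 0, and let γ_{μ,σ} denote the Gaussian probability measure on ℝ with mean μ and variance σ². If f : ℝ → ℝ is Lipschitz continuous with Lipschitz constant L (and hence square-integrable with respect to γ_{μ,σ}), then Var(f) ≤ L² · σ². -/
open MeasureTheory ProbabilityTheory Real Set
open scoped NNReal ENNReal

lemma aux_integral_sq_exp {b : ℝ} (hb : 0 < b) :
    ∫ x : ℝ, x ^ 2 * rexp (-b * x ^ 2) = b ^ (-(3:ℝ)/2) * Real.sqrt π / 2 := by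
  have hint : Integrable fun x : ℝ => x ^ 2 * rexp (-b * x ^ 2) := by
    have := integrable_rpow_mul_exp_neg_mul_sq hb (s := 2) (by norm_num)
    simpa [rpow_two] using this
  have hIoi : ∫ x in Ioi (0:ℝ), x ^ 2 * rexp (-b * x ^ 2)
      = b ^ (-(3:ℝ)/2) * Real.sqrt π / 4 := by
    have h := integral_rpow_mul_exp_neg_mul_rpow (p := 2) (q := 2) two_pos (by norm_num) hb
    simp_rw [rpow_two] at h
    rw [show ((2:ℝ)+1)/2 = 1/2 + 1 by norm_num, Real.Gamma_add_one (by norm_num),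
      Real.Gamma_one_half_eq, show (-((2:ℝ)+1)/2) = -(3:ℝ)/2 by norm_num] at h
    rw [h]; ring
  have hIic : ∫ x in Iic (0:ℝ), x ^ 2 * rexp (-b * x ^ 2)
      = ∫ x in Ioi (0:ℝ), x ^ 2 * rexp (-b * x ^ 2) := by
    rw [← neg_zero, ← integral_comp_neg_Ioi]
    simp
  have hsplit := integral_add_compl (measurableSet_Ioi (a := (0:ℝ))) hint
  rw [compl_Ioi] at hsplit
  rw [← hsplit, hIic, hIoi]; ring

lemma integral_gaussianReal_eq (μ : ℝ) {v : ℝ≥0} (hv : v ≠ 0) (g : ℝ → ℝ) :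
    ∫ x, g x ∂(gaussianReal μ v) = ∫ x, gaussianPDFReal μ v x * g x := by
  rw [gaussianReal_of_var_ne_zero _ hv,
    show gaussianPDF μ v = fun x => ((Real.toNNReal (gaussianPDFReal μ v x) : ℝ≥0) : ℝ≥0∞)
      from rfl,
    integral_withDensity_eq_integral_smul ((measurable_gaussianPDFReal μ v).real_toNNReal) g]
  congr 1; funext x
  simp [NNReal.smul_def, Real.coe_toNNReal _ (gaussianPDFReal_nonneg μ v x)]

lemma integrable_gaussianReal_iff (μ : ℝ) {v : ℝ≥0} (hv : v ≠ 0) (g : ℝ → ℝ) :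
    Integrable g (gaussianReal μ v)
      ↔ Integrable (fun x => gaussianPDFReal μ v x * g x) := by
  rw [gaussianReal_of_var_ne_zero _ hv,
    show gaussianPDF μ v = fun x => ((Real.toNNReal (gaussianPDFReal μ v x) : ℝ≥0) : ℝ≥0∞)
      from rfl,
    integrable_withDensity_iff_integrable_smul ((measurable_gaussianPDFReal μ v).real_toNNReal)]
  exact integrable_congr (Filter.Eventually.of_forall fun x => by
    simp [NNReal.smul_def, Real.coe_toNNReal _ (gaussianPDFReal_nonneg μ v x)])

lemma gauss_shift (μ : ℝ) {v : ℝ≥0} (hvpos : (0:ℝ) < v) :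
    (fun x => gaussianPDFReal μ v x * (x - μ) ^ 2)
      = fun x => (fun t => (Real.sqrt (2 * π * v))⁻¹
          * (t ^ 2 * rexp (-(2 * (v:ℝ))⁻¹ * t ^ 2))) (x - μ) := by
  funext x
  simp only [gaussianPDFReal]
  rw [show -(x - μ)^2/(2*(v:ℝ)) = -(2*(v:ℝ))⁻¹ * (x - μ)^2 by field_simp]
  ring

lemma integrable_sq_sub_gaussianReal (μ σ : ℝ) (hσ : 0 < σ) :
    Integrable (fun x => (x - μ) ^ 2) (gaussianReal μ ⟨σ^2, sq_nonneg σ⟩) := by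
  set v : ℝ≥0 := ⟨σ^2, sq_nonneg σ⟩ with hvdef
  have hvpos : (0:ℝ) < v := by rw [hvdef]; show (0:ℝ) < σ ^ 2; positivity
  have hv : v ≠ 0 := fun h => by simp [h] at hvpos
  rw [integrable_gaussianReal_iff μ hv, gauss_shift μ hvpos]
  have hb : (0:ℝ) < (2 * (v:ℝ))⁻¹ := by positivity
  have hint : Integrable fun t : ℝ => t ^ 2 * rexp (-(2 * (v:ℝ))⁻¹ * t ^ 2) := by
    have := integrable_rpow_mul_exp_neg_mul_sq hb (s := 2) (by norm_num)
    simpa [rpow_two] using this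
  exact (hint.const_mul _).comp_sub_right μ

lemma integral_sq_sub_gaussianReal (μ σ : ℝ) (hσ : 0 < σ) :
    ∫ x, (x - μ) ^ 2 ∂(gaussianReal μ ⟨σ^2, sq_nonneg σ⟩) = σ ^ 2 := by
  set v : ℝ≥0 := ⟨σ^2, sq_nonneg σ⟩ with hvdef
  have hvpos : (0:ℝ) < v := by rw [hvdef]; show (0:ℝ) < σ ^ 2; positivity
  have hv : v ≠ 0 := fun h => by simp [h] at hvpos
  rw [integral_gaussianReal_eq μ hv, gauss_shift μ hvpos,
    integral_sub_right_eq_self (μ := volume)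
      (fun t => (Real.sqrt (2 * π * (v:ℝ)))⁻¹ * (t ^ 2 * rexp (-(2 * (v:ℝ))⁻¹ * t ^ 2))) μ,
    integral_const_mul,
    aux_integral_sq_exp (by positivity : (0:ℝ) < (2 * (v:ℝ))⁻¹)]
  have hw : (0:ℝ) < 2 * (v:ℝ) := by positivity
  have h1 : ((2 * (v:ℝ))⁻¹) ^ (-(3:ℝ)/2) = (2 * (v:ℝ)) ^ ((3:ℝ)/2) := by
    rw [Real.inv_rpow hw.le, ← Real.rpow_neg hw.le]
    norm_num
  have h2 : (2 * (v:ℝ)) ^ ((3:ℝ)/2) = (2 * (v:ℝ)) * Real.sqrt (2 * (v:ℝ)) := by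
    rw [show ((3:ℝ)/2) = 1 + 1/2 by norm_num, Real.rpow_add hw, Real.rpow_one,
      Real.sqrt_eq_rpow]
  have h3 : Real.sqrt (2 * π * (v:ℝ)) = Real.sqrt π * Real.sqrt (2 * (v:ℝ)) := by
    rw [show 2 * π * (v:ℝ) = π * (2 * (v:ℝ)) by ring, Real.sqrt_mul pi_pos.le]
  rw [h1, h2, h3]
  have hsp : (0:ℝ) < Real.sqrt π := Real.sqrt_pos.mpr pi_pos
  have hsw : (0:ℝ) < Real.sqrt (2 * (v:ℝ)) := Real.sqrt_pos.mpr hw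
  have hvσ : (v:ℝ) = σ ^ 2 := rfl
  field_simp
  rw [hvσ]

/-- If `f : ℝ → ℝ` is Lipschitz with constant `L`, then its variance under the Gaussian
measure `γ_{μ,σ}` with mean `μ` and variance `σ²` satisfies `Var(f) ≤ L²·σ²`. -/
theorem gaussian_variance_le_lipschitz (μ σ : ℝ) (hσ : 0 < σ) (L : NNReal) (f : ℝ → ℝ)
    (hf : LipschitzWith L f) :
    ∫ x, (f x - ∫ y, f y ∂(gaussianReal μ ⟨σ ^ 2, sq_nonneg σ⟩)) ^ 2
        ∂(gaussianReal μ ⟨σ ^ 2, sq_nonneg σ⟩)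
      ≤ (L : ℝ) ^ 2 * σ ^ 2 := by
  set ν := gaussianReal μ ⟨σ ^ 2, sq_nonneg σ⟩ with hν
  haveI : IsProbabilityMeasure ν := by
    rw [hν]; exact instIsProbabilityMeasureGaussianReal μ _
  have h2 : Integrable (fun x => (x - μ) ^ 2) ν := integrable_sq_sub_gaussianReal μ σ hσ
  have hM2 : ∫ x, (x - μ) ^ 2 ∂ν = σ ^ 2 := integral_sq_sub_gaussianReal μ σ hσ
  have hdist : ∀ x : ℝ, |f x - f μ| ≤ (L:ℝ) * |x - μ| := fun x => by
    have := hf.dist_le_mul x μ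
    rwa [Real.dist_eq, Real.dist_eq] at this
  have hLip : ∀ x : ℝ, (f x - f μ) ^ 2 ≤ (L:ℝ) ^ 2 * (x - μ) ^ 2 := fun x => by
    have h := hdist x
    nlinarith [abs_nonneg (f x - f μ), abs_nonneg (x - μ), sq_abs (f x - f μ), sq_abs (x - μ)]
  have hg2 : Integrable (fun x => (f x - f μ) ^ 2) ν := by
    refine (h2.const_mul ((L:ℝ) ^ 2)).mono'
      ((hf.continuous.sub continuous_const).pow 2).aestronglyMeasurable ?_
    refine Filter.Eventually.of_forall fun x => ?_
    rw [Real.norm_eq_abs, abs_of_nonneg (sq_nonneg _)]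
    exact hLip x
  have hf1 : Integrable f ν := by
    refine ((h2.const_mul (L:ℝ)).add (integrable_const (|f μ| + (L:ℝ)))).mono'
      hf.continuous.aestronglyMeasurable ?_
    refine Filter.Eventually.of_forall fun x => ?_
    have h1 := hdist x
    have h2' : |x - μ| ≤ 1 + (x - μ) ^ 2 := by
      nlinarith [sq_nonneg (|x - μ| - 1), sq_abs (x - μ), abs_nonneg (x - μ)]
    have hL0 : (0:ℝ) ≤ (L:ℝ) := L.coe_nonneg
    rw [Real.norm_eq_abs]
    show |f x| ≤ (L:ℝ) * (x - μ) ^ 2 + (|f μ| + (L:ℝ))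
    have habs : |f x| ≤ |f μ| + |f x - f μ| := by
      have := abs_add_le (f μ) (f x - f μ)
      simpa using this
    nlinarith
  set m := ∫ y, f y ∂ν with hm
  have hfsub : Integrable (fun x => f x - f μ) ν := hf1.sub (integrable_const _)
  have hmean : ∫ x, (f x - f μ) ∂ν = m - f μ := by
    rw [integral_sub hf1 (integrable_const _), integral_const]
    simp [hm]
  have key : ∫ x, (f x - m) ^ 2 ∂ν = ∫ x, (f x - f μ) ^ 2 ∂ν - (m - f μ) ^ 2 := by
    have hexp : ∀ x, (f x - m) ^ 2
        = (f x - f μ) ^ 2 - (2 * (m - f μ)) * (f x - f μ) + (m - f μ) ^ 2 := fun x => by ring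
    simp_rw [hexp]
    have hA : Integrable (fun x => (f x - f μ) ^ 2 - 2 * (m - f μ) * (f x - f μ)) ν :=
      hg2.sub (hfsub.const_mul _)
    have hB : Integrable (fun x => 2 * (m - f μ) * (f x - f μ)) ν := hfsub.const_mul _
    rw [integral_add hA (integrable_const _), integral_sub hg2 hB, integral_const_mul, hmean,
      integral_const]
    simp only [probReal_univ, one_smul]
    ring
  have hle : ∫ x, (f x - f μ) ^ 2 ∂ν ≤ (L:ℝ) ^ 2 * σ ^ 2 := by
    calc ∫ x, (f x - f μ) ^ 2 ∂ν ≤ ∫ x, (L:ℝ) ^ 2 * (x - μ) ^ 2 ∂ν :=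
          integral_mono hg2 (h2.const_mul _) hLip
      _ = (L:ℝ) ^ 2 * σ ^ 2 := by rw [integral_const_mul, hM2]
  rw [key]
  nlinarith [sq_nonneg (m - f μ)]
end
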